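/- The group generated by a, b, c subject to a³ = b³ = c³ = 1 and abc = 1 is isomorphic to ℤ/3 ⋉ ℤ², where the generator of ℤ/3 acts on ℤ² by a rotation of order 3 (i.e., via a matrix of order 3 in SL₂(ℤ)). -/

import Mathlib

/-- Relations of the group `⟨a,b,c | a³=b³=c³=1, abc=1⟩`. -/
def rels2 : Set (FreeGroup (Fin 3)) :=
  (Set.range fun i : Fin 3 => FreeGroup.of i ^ 3) ∪
    {FreeGroup.of 0 * FreeGroup.of 1 * FreeGroup.of 2}

namespace Stmt2Aux

open Multiplicative

/-! ### The rotation matrix -/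

def Mrot : Matrix (Fin 2) (Fin 2) ℤ := !![0, -1; 1, -1]

lemma Mrot_mul_mul : Mrot * Mrot * Mrot = 1 := by
  ext i j
  fin_cases i <;> fin_cases j <;>
    simp [Mrot, Matrix.mul_apply, Fin.sum_univ_two, Matrix.one_apply]

lemma Mrot_pow3 : Mrot ^ 3 = 1 := by
  rw [pow_succ, pow_succ, pow_one]; exact Mrot_mul_mul

lemma mulVec_Mrot (v : Fin 2 → ℤ) : Mrot.mulVec v = ![-(v 1), v 0 - v 1] := by
  funext i
  fin_cases i <;>
    simp [Mrot, Matrix.mulVec, dotProduct, Fin.sum_univ_two] <;> ring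

/-! ### The automorphism of `ℤ²` given by `Mrot` -/

def rotAut : MulAut (Multiplicative (Fin 2 → ℤ)) where
  toFun x := ofAdd (Mrot.mulVec x.toAdd)
  invFun x := ofAdd ((Mrot * Mrot).mulVec x.toAdd)
  left_inv x := by
    show ofAdd ((Mrot * Mrot).mulVec (Mrot.mulVec x.toAdd)) = x
    rw [Matrix.mulVec_mulVec, Mrot_mul_mul, Matrix.one_mulVec]
    rfl
  right_inv x := by
    show ofAdd (Mrot.mulVec ((Mrot * Mrot).mulVec x.toAdd)) = x
    rw [Matrix.mulVec_mulVec, show Mrot * (Mrot * Mrot) = 1 by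
      rw [← mul_assoc]; exact Mrot_mul_mul, Matrix.one_mulVec]
    rfl
  map_mul' x y := by
    show ofAdd (Mrot.mulVec (x.toAdd + y.toAdd)) =
      ofAdd (Mrot.mulVec x.toAdd + Mrot.mulVec y.toAdd)
    rw [Matrix.mulVec_add]

lemma rotAut_apply (v : Fin 2 → ℤ) : rotAut (ofAdd v) = ofAdd (Mrot.mulVec v) := rfl

lemma rotAut_pow_apply (m : ℕ) (v : Fin 2 → ℤ) :
    (rotAut ^ m) (ofAdd v) = ofAdd ((Mrot ^ m).mulVec v) := by
  induction m generalizing v with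
  | zero => simp [Matrix.one_mulVec]
  | succ n ih =>
      rw [pow_succ, MulAut.mul_apply, rotAut_apply, ih (Mrot.mulVec v),
        Matrix.mulVec_mulVec, ← pow_succ]

lemma rotAut_pow3 : rotAut ^ 3 = 1 := by
  ext x
  have hx : x = ofAdd x.toAdd := rfl
  rw [hx, rotAut_pow_apply, Mrot_pow3, Matrix.one_mulVec]
  rfl

/-! ### Homomorphisms out of `Multiplicative (ZMod 3)` -/

def homOf3 {G : Type*} [Monoid G] (g : G) (hg : g ^ 3 = 1) :
    Multiplicative (ZMod 3) →* G where
  toFun k := g ^ (k.toAdd.val)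
  map_one' := by
    show g ^ (0 : ZMod 3).val = 1
    simp [ZMod.val_zero]
  map_mul' a b := by
    show g ^ ((a.toAdd + b.toAdd).val) = g ^ a.toAdd.val * g ^ b.toAdd.val
    rw [ZMod.val_add, ← pow_eq_pow_mod _ hg, pow_add]

lemma homOf3_apply {G : Type*} [Monoid G] (g : G) (hg : g ^ 3 = 1) (k : ZMod 3) :
    homOf3 g hg (ofAdd k) = g ^ k.val := rfl

/-! ### The action homomorphism φ -/

def phi : Multiplicative (ZMod 3) →* MulAut (Multiplicative (Fin 2 → ℤ)) :=
  homOf3 rotAut rotAut_pow3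

lemma phi_apply_apply (k : ZMod 3) (v : Fin 2 → ℤ) :
    phi (ofAdd k) (ofAdd v) = ofAdd ((Mrot ^ k.val).mulVec v) := by
  rw [phi, homOf3_apply, rotAut_pow_apply]

/-! ### The semidirect product -/

abbrev G2 := Multiplicative (Fin 2 → ℤ) ⋊[phi] Multiplicative (ZMod 3)

/-! ### The presented group and its basic relations -/

abbrev P2 := PresentedGroup rels2

def A : P2 := .of 0
def B : P2 := .of 1
def C : P2 := .of 2

lemma mk_rel {r : FreeGroup (Fin 3)} (h : r ∈ rels2) : PresentedGroup.mk rels2 r = 1 := by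
  apply (QuotientGroup.eq_one_iff _).2
  exact Subgroup.subset_normalClosure h

lemma hA3 : A ^ 3 = 1 := by
  have := mk_rel (Or.inl ⟨0, rfl⟩)
  rw [map_pow] at this
  exact this

lemma hB3 : B ^ 3 = 1 := by
  have := mk_rel (Or.inl ⟨1, rfl⟩)
  rw [map_pow] at this
  exact this

lemma hC3 : C ^ 3 = 1 := by
  have := mk_rel (Or.inl ⟨2, rfl⟩)
  rw [map_pow] at this
  exact this

lemma hA : A * A * A = 1 := by
  have := hA3; rw [pow_succ, pow_succ, pow_one] at this; exact this
lemma hB : B * B * B = 1 := by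
  have := hB3; rw [pow_succ, pow_succ, pow_one] at this; exact this
lemma hC : C * C * C = 1 := by
  have := hC3; rw [pow_succ, pow_succ, pow_one] at this; exact this

lemma hABC : A * B * C = 1 := by
  have : PresentedGroup.mk rels2 (FreeGroup.of (0:Fin 3) * FreeGroup.of 1 * FreeGroup.of 2) = 1 :=
    mk_rel (Or.inr rfl)
  rw [map_mul, map_mul] at this
  exact this

lemma hBeq : B = A⁻¹ * C⁻¹ := by
  have h1 : A * B = C⁻¹ := by
    rw [eq_inv_iff_mul_eq_one]; exact hABC
  calc B = A⁻¹ * (A * B) := by group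
    _ = A⁻¹ * C⁻¹ := by rw [h1]

lemma hCA : (C * A) * (C * A) * (C * A) = 1 := by
  have h2 : C * A = B⁻¹ := by
    rw [eq_inv_iff_mul_eq_one, hBeq]; group
  rw [h2]
  calc B⁻¹ * B⁻¹ * B⁻¹ = (B * B * B)⁻¹ := by group
    _ = 1 := by rw [hB, inv_one]

lemma hAC : (A * C) * (A * C) * (A * C) = 1 := by
  calc (A * C) * (A * C) * (A * C) = A * ((C * A) * (C * A) * (C * A)) * A⁻¹ := by group
    _ = A * 1 * A⁻¹ := by rw [hCA]
    _ = 1 := by group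

lemma hAA : A * A = A⁻¹ := by rw [eq_inv_iff_mul_eq_one]; exact hA
lemma hCC : C * C = C⁻¹ := by rw [eq_inv_iff_mul_eq_one]; exact hC

lemma hCiCi : C⁻¹ * C⁻¹ = C := by
  calc C⁻¹ * C⁻¹ = (C * C)⁻¹ := by group
    _ = (C⁻¹)⁻¹ := by rw [hCC]
    _ = C := inv_inv C

lemma key : C * A * C * A * C = A⁻¹ := by
  have k1 : (C * A) * (C * A) = (C * A)⁻¹ := by
    rw [eq_inv_iff_mul_eq_one]; exact hCA
  calc C * A * C * A * C = ((C * A) * (C * A)) * C := by group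
    _ = (C * A)⁻¹ * C := by rw [k1]
    _ = A⁻¹ := by group

lemma key2 : A * C * A * C * A = C⁻¹ := by
  have k1 : (A * C) * (A * C) = (A * C)⁻¹ := by
    rw [eq_inv_iff_mul_eq_one]; exact hAC
  calc A * C * A * C * A = ((A * C) * (A * C)) * A := by group
    _ = (A * C)⁻¹ * A := by rw [k1]
    _ = C⁻¹ := by group

/-! ### The lattice elements `X`, `Y` -/

def X : P2 := A * C⁻¹
def Y : P2 := C * A * C

lemma L1 : X * Y = Y * X := by
  have h1 : X * Y = A⁻¹ * C := by
    calc X * Y = (A * A) * C := by rw [X, Y]; group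
      _ = A⁻¹ * C := by rw [hAA]
  have h2 : Y * X = A⁻¹ * C := by
    calc Y * X = (C * A * C * A * C) * (C⁻¹ * C⁻¹) := by rw [X, Y]; group
      _ = A⁻¹ * (C⁻¹ * C⁻¹) := by rw [key]
      _ = A⁻¹ * C := by rw [hCiCi]
  rw [h1, h2]

lemma hXY : Commute X Y := L1

lemma L2 : C * X * C⁻¹ = Y := by
  calc C * X * C⁻¹ = C * A * (C⁻¹ * C⁻¹) := by rw [X]; group
    _ = C * A * C := by rw [hCiCi]
    _ = Y := rfl

lemma L3 : C * Y * C⁻¹ = X⁻¹ * Y⁻¹ := by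
  calc C * Y * C⁻¹ = C * (C * A) := by rw [Y]; group
    _ = C * (A⁻¹ * (C⁻¹ * (A⁻¹ * (A * C * A * C * A)))) := by group
    _ = C * (A⁻¹ * (C⁻¹ * (A⁻¹ * C⁻¹))) := by rw [key2]
    _ = X⁻¹ * Y⁻¹ := by rw [X, Y]; group

/-! ### The homomorphism `ℤ² →* P2` -/

def f1 : Multiplicative (Fin 2 → ℤ) →* P2 :=
  MonoidHom.mk' (fun v => X ^ (v.toAdd 0) * Y ^ (v.toAdd 1)) (by
    intro a b
    show X ^ (a.toAdd 0 + b.toAdd 0) * Y ^ (a.toAdd 1 + b.toAdd 1) =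
      X ^ (a.toAdd 0) * Y ^ (a.toAdd 1) * (X ^ (b.toAdd 0) * Y ^ (b.toAdd 1))
    rw [zpow_add, zpow_add]
    have h := (hXY.zpow_zpow (b.toAdd 0) (a.toAdd 1)).eq
    calc X ^ (a.toAdd 0) * X ^ (b.toAdd 0) * (Y ^ (a.toAdd 1) * Y ^ (b.toAdd 1))
        = X ^ (a.toAdd 0) * (X ^ (b.toAdd 0) * Y ^ (a.toAdd 1)) * Y ^ (b.toAdd 1) := by group
      _ = X ^ (a.toAdd 0) * (Y ^ (a.toAdd 1) * X ^ (b.toAdd 0)) * Y ^ (b.toAdd 1) := by rw [h]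
      _ = _ := by group)

lemma f1_apply (v : Fin 2 → ℤ) : f1 (ofAdd v) = X ^ (v 0) * Y ^ (v 1) := rfl

def f2 : Multiplicative (ZMod 3) →* P2 := homOf3 C hC3

/-! ### Compatibility of `f1`, `f2` with the action -/

lemma step (v : Fin 2 → ℤ) :
    f1 (ofAdd (Mrot.mulVec v)) = C * f1 (ofAdd v) * C⁻¹ := by
  rw [f1_apply, f1_apply, mulVec_Mrot]
  have e0 : (![-(v 1), v 0 - v 1] : Fin 2 → ℤ) 0 = -(v 1) := rfl
  have e1 : (![-(v 1), v 0 - v 1] : Fin 2 → ℤ) 1 = v 0 - v 1 := rfl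
  rw [e0, e1]
  symm
  have hinv : (X⁻¹ * Y⁻¹) ^ (v 1) = X ^ (-(v 1)) * Y ^ (-(v 1)) := by
    rw [(hXY.inv_inv).mul_zpow, inv_zpow, inv_zpow, ← zpow_neg, ← zpow_neg]
  have hsw := (hXY.symm.zpow_zpow (v 0) (-(v 1))).eq
  calc C * (X ^ (v 0) * Y ^ (v 1)) * C⁻¹
      = (C * X ^ (v 0) * C⁻¹) * (C * Y ^ (v 1) * C⁻¹) := by group
    _ = (C * X * C⁻¹) ^ (v 0) * (C * Y * C⁻¹) ^ (v 1) := by rw [conj_zpow, conj_zpow]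
    _ = Y ^ (v 0) * (X⁻¹ * Y⁻¹) ^ (v 1) := by rw [L2, L3]
    _ = Y ^ (v 0) * (X ^ (-(v 1)) * Y ^ (-(v 1))) := by rw [hinv]
    _ = (Y ^ (v 0) * X ^ (-(v 1))) * Y ^ (-(v 1)) := by group
    _ = (X ^ (-(v 1)) * Y ^ (v 0)) * Y ^ (-(v 1)) := by rw [hsw]
    _ = X ^ (-(v 1)) * Y ^ (v 0 + -(v 1)) := by rw [mul_assoc, ← zpow_add]
    _ = X ^ (-(v 1)) * Y ^ (v 0 - v 1) := by rw [← sub_eq_add_neg]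

lemma step_pow (m : ℕ) (v : Fin 2 → ℤ) :
    f1 (ofAdd ((Mrot ^ m).mulVec v)) = C ^ m * f1 (ofAdd v) * (C ^ m)⁻¹ := by
  induction m generalizing v with
  | zero => simp [Matrix.one_mulVec]
  | succ n ih =>
      rw [pow_succ, ← Matrix.mulVec_mulVec, ih (Mrot.mulVec v), step]
      group

lemma compat : ∀ g : Multiplicative (ZMod 3),
    f1.comp (phi g).toMonoidHom = (MulAut.conj (f2 g)).toMonoidHom.comp f1 := by
  intro g
  refine MonoidHom.ext fun x => ?_
  show f1 ((phi g) x) = MulAut.conj (f2 g) (f1 x)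
  have hx : x = ofAdd x.toAdd := rfl
  have hg : g = ofAdd g.toAdd := rfl
  rw [hx, hg, phi_apply_apply, step_pow, MulAut.conj_apply]
  rfl

/-! ### The backward homomorphism -/

def Lhom : G2 →* P2 := SemidirectProduct.lift f1 f2 compat

lemma Lhom_inl (n : Multiplicative (Fin 2 → ℤ)) :
    Lhom (SemidirectProduct.inl n) = f1 n := SemidirectProduct.lift_inl _ _ _ _

lemma Lhom_inr (g : Multiplicative (ZMod 3)) :
    Lhom (SemidirectProduct.inr g) = f2 g := SemidirectProduct.lift_inr _ _ _ _

/-! ### The forward homomorphism -/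

def fgen : Fin 3 → G2 :=
  ![⟨ofAdd ![1, 0], ofAdd 1⟩, ⟨ofAdd ![1, 1], ofAdd 1⟩, ⟨ofAdd 0, ofAdd 1⟩]

lemma sum_rot (w : Fin 2 → ℤ) :
    w + Mrot.mulVec w + (Mrot * Mrot).mulVec w = 0 := by
  rw [← Matrix.mulVec_mulVec, mulVec_Mrot w, mulVec_Mrot]
  funext i
  fin_cases i <;> simp [Matrix.vecHead, Matrix.vecTail] <;> ring

lemma phi_one_apply (w : Fin 2 → ℤ) :
    phi (ofAdd (1 : ZMod 3)) (ofAdd w) = ofAdd (Mrot.mulVec w) := by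
  rw [phi_apply_apply, ZMod.val_one, pow_one]

lemma phi_two_apply (w : Fin 2 → ℤ) :
    phi (ofAdd (1 : ZMod 3) * ofAdd 1) (ofAdd w) = ofAdd ((Mrot * Mrot).mulVec w) := by
  have h : (ofAdd (1 : ZMod 3) * ofAdd 1) = ofAdd (2 : ZMod 3) := rfl
  rw [h, phi_apply_apply, show ((2 : ZMod 3)).val = 2 from rfl, pow_two]

lemma cube (w : Fin 2 → ℤ) : (⟨ofAdd w, ofAdd 1⟩ : G2) ^ 3 = 1 := by
  rw [pow_succ, pow_succ, pow_one, SemidirectProduct.mul_def, SemidirectProduct.mul_def]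
  apply SemidirectProduct.ext
  · show (ofAdd w * phi (ofAdd 1) (ofAdd w) *
      phi (ofAdd 1 * ofAdd 1) (ofAdd w)).toAdd = (0 : Fin 2 → ℤ)
    rw [phi_one_apply, phi_two_apply]
    show w + Mrot.mulVec w + (Mrot * Mrot).mulVec w = 0
    exact sum_rot w
  · show ((ofAdd (1:ZMod 3) * ofAdd 1 * ofAdd 1).toAdd = (0 : ZMod 3))
    decide

lemma rels_check : ∀ r ∈ rels2, FreeGroup.lift fgen r = 1 := by
  intro r hr
  rcases hr with ⟨i, rfl⟩ | rfl
  · rw [map_pow, FreeGroup.lift_apply_of]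
    fin_cases i
    · exact cube ![1, 0]
    · exact cube ![1, 1]
    · exact cube 0
  · rw [map_mul, map_mul, FreeGroup.lift_apply_of, FreeGroup.lift_apply_of, FreeGroup.lift_apply_of]
    show (⟨ofAdd ![1,0], ofAdd 1⟩ : G2) * ⟨ofAdd ![1,1], ofAdd 1⟩ * ⟨ofAdd 0, ofAdd 1⟩ = 1
    rw [SemidirectProduct.mul_def, SemidirectProduct.mul_def]
    apply SemidirectProduct.ext
    · show (ofAdd ![1,0] * phi (ofAdd 1) (ofAdd ![1,1]) *
        phi (ofAdd 1 * ofAdd 1) (ofAdd (0 : Fin 2 → ℤ))).toAdd = (0 : Fin 2 → ℤ)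
      rw [phi_one_apply, phi_two_apply, Matrix.mulVec_zero]
      show (![1,0] : Fin 2 → ℤ) + Mrot.mulVec ![1,1] + 0 = 0
      rw [mulVec_Mrot]
      funext i
      fin_cases i <;> simp
    · show ((ofAdd (1:ZMod 3) * ofAdd 1 * ofAdd 1).toAdd = (0 : ZMod 3))
      decide

def Fhom : P2 →* G2 := PresentedGroup.toGroup rels_check

lemma Fhom_A : Fhom A = ⟨ofAdd ![1, 0], ofAdd 1⟩ := PresentedGroup.toGroup.of rels_check
lemma Fhom_B : Fhom B = ⟨ofAdd ![1, 1], ofAdd 1⟩ := PresentedGroup.toGroup.of rels_check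
lemma Fhom_C : Fhom C = ⟨ofAdd 0, ofAdd 1⟩ := PresentedGroup.toGroup.of rels_check

lemma Fhom_C' : Fhom C = SemidirectProduct.inr (ofAdd 1) := Fhom_C

lemma Fhom_X : Fhom X = SemidirectProduct.inl (ofAdd ![1, 0]) := by
  rw [X, map_mul, map_inv, Fhom_A, Fhom_C']
  rw [show (⟨ofAdd ![1, 0], ofAdd 1⟩ : G2) =
    SemidirectProduct.inl (ofAdd ![1, 0]) * SemidirectProduct.inr (ofAdd 1) from
    SemidirectProduct.mk_eq_inl_mul_inr _ _]
  rw [mul_assoc, mul_inv_cancel, mul_one]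

lemma Mrot_e1 : Mrot.mulVec ![1, 0] = ![0, 1] := by
  rw [mulVec_Mrot]
  funext i; fin_cases i <;> simp

lemma Fhom_Y : Fhom Y = SemidirectProduct.inl (ofAdd ![0, 1]) := by
  have hy : Y = C * X * C⁻¹ := L2.symm
  rw [hy, map_mul, map_mul, map_inv, Fhom_C', Fhom_X]
  have hi : (SemidirectProduct.inr (ofAdd (1:ZMod 3)) : G2)⁻¹ =
      SemidirectProduct.inr ((ofAdd (1:ZMod 3))⁻¹) := (map_inv _ _).symm
  rw [hi, ← SemidirectProduct.inl_aut]
  rw [show phi (ofAdd (1:ZMod 3)) (ofAdd ![1, 0]) = ofAdd ![0, 1] by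
    rw [phi_one_apply, Mrot_e1]]

/-! ### The two compositions are the identity -/

lemma comp1 : Lhom.comp Fhom = MonoidHom.id P2 := by
  apply PresentedGroup.ext
  intro i
  fin_cases i
  · show Lhom (Fhom A) = A
    rw [Fhom_A, show (⟨ofAdd ![1, 0], ofAdd 1⟩ : G2) =
      SemidirectProduct.inl (ofAdd ![1, 0]) * SemidirectProduct.inr (ofAdd 1) from
      SemidirectProduct.mk_eq_inl_mul_inr _ _, map_mul, Lhom_inl, Lhom_inr]
    rw [f1_apply]
    show X ^ ((![1,0] : Fin 2 → ℤ) 0) * Y ^ ((![1,0] : Fin 2 → ℤ) 1) * C ^ (1 : ZMod 3).val = A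
    norm_num [ZMod.val_one]
    rw [X]
    group
  · show Lhom (Fhom B) = B
    rw [Fhom_B, show (⟨ofAdd ![1, 1], ofAdd 1⟩ : G2) =
      SemidirectProduct.inl (ofAdd ![1, 1]) * SemidirectProduct.inr (ofAdd 1) from
      SemidirectProduct.mk_eq_inl_mul_inr _ _, map_mul, Lhom_inl, Lhom_inr]
    rw [f1_apply]
    show X ^ ((![1,1] : Fin 2 → ℤ) 0) * Y ^ ((![1,1] : Fin 2 → ℤ) 1) * C ^ (1 : ZMod 3).val = B
    norm_num [ZMod.val_one]
    rw [hBeq]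
    calc X * Y * C = (A * A) * (C * C) := by rw [X, Y]; group
      _ = A⁻¹ * C⁻¹ := by rw [hAA, hCC]
  · show Lhom (Fhom C) = C
    rw [Fhom_C', Lhom_inr]
    show C ^ (1 : ZMod 3).val = C
    rw [ZMod.val_one, pow_one]

lemma zsmul_decomp (v : Fin 2 → ℤ) :
    v = v 0 • (![1, 0] : Fin 2 → ℤ) + v 1 • (![0, 1] : Fin 2 → ℤ) := by
  funext i; fin_cases i <;> simp

lemma comp2 : Fhom.comp Lhom = MonoidHom.id G2 := by
  apply SemidirectProduct.hom_ext
  · refine MonoidHom.ext fun x => ?_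
    show Fhom (Lhom (SemidirectProduct.inl x)) = SemidirectProduct.inl x
    rw [Lhom_inl]
    have hx : x = ofAdd x.toAdd := rfl
    have key : (ofAdd ![1,0] : Multiplicative (Fin 2 → ℤ)) ^ (x.toAdd 0) *
        (ofAdd ![0,1] : Multiplicative (Fin 2 → ℤ)) ^ (x.toAdd 1) = ofAdd x.toAdd := by
      rw [← ofAdd_zsmul, ← ofAdd_zsmul, ← ofAdd_add]
      exact congrArg ofAdd (zsmul_decomp x.toAdd).symm
    rw [hx, f1_apply, map_mul, map_zpow, map_zpow, Fhom_X, Fhom_Y,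
      ← (SemidirectProduct.inl (φ := phi)).map_zpow,
      ← (SemidirectProduct.inl (φ := phi)).map_zpow,
      ← (SemidirectProduct.inl (φ := phi)).map_mul, key]
  · refine MonoidHom.ext fun x => ?_
    show Fhom (Lhom (SemidirectProduct.inr x)) = SemidirectProduct.inr x
    rw [Lhom_inr]
    show Fhom (C ^ x.toAdd.val) = SemidirectProduct.inr x
    rw [map_pow, Fhom_C', ← map_pow]
    congr 1
    rw [← ofAdd_nsmul, nsmul_eq_mul, mul_one]
    show ofAdd ((x.toAdd.val : ZMod 3)) = x
    rw [ZMod.natCast_val, ZMod.cast_id]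
    rfl

def theIso : P2 ≃* G2 := MonoidHom.toMulEquiv Fhom Lhom comp1 comp2

end Stmt2Aux

/-- `⟨a,b,c | a³=b³=c³=1, abc=1⟩ ≅ ℤ/3 ⋉ ℤ²`, where the generator of `ℤ/3`
acts on `ℤ²` by a rotation of order 3, i.e. via a matrix of order 3 in `SL₂(ℤ)`. -/
theorem stmt2 :
    ∃ M : Matrix (Fin 2) (Fin 2) ℤ, M.det = 1 ∧ M ^ 3 = 1 ∧ M ≠ 1 ∧
      ∃ φ : Multiplicative (ZMod 3) →* MulAut (Multiplicative (Fin 2 → ℤ)),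
        (∀ v : Fin 2 → ℤ,
          φ (Multiplicative.ofAdd 1) (Multiplicative.ofAdd v) =
            Multiplicative.ofAdd (M.mulVec v)) ∧
        Nonempty (PresentedGroup rels2 ≃*
          Multiplicative (Fin 2 → ℤ) ⋊[φ] Multiplicative (ZMod 3)) := by
  refine ⟨Stmt2Aux.Mrot, ?_, Stmt2Aux.Mrot_pow3, ?_, Stmt2Aux.phi, ?_, ⟨Stmt2Aux.theIso⟩⟩
  · rw [Stmt2Aux.Mrot, Matrix.det_fin_two_of]; ring
  · intro h
    have h00 : Stmt2Aux.Mrot 0 0 = (1 : Matrix (Fin 2) (Fin 2) ℤ) 0 0 := by rw [h]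
    rw [Matrix.one_apply_eq] at h00
    simp [Stmt2Aux.Mrot] at h00
  · intro v
    rw [Stmt2Aux.phi_apply_apply, ZMod.val_one, pow_one]
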